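/- Let k ⊆ l be a finite extension of fields and let K be a field containing k such that l and K are linearly disjoint subfields of a common extension with l·K/K finite. If x ∈ (l·K)^× actually lies in l, then N_{lK/K}(x) = N_{l/k'}(x) where k' = l ∩ K, provided lK/K and l/k' have the same degree. -/
import Mathlib


open Module

/-- Let `l/k` be a finite extension, `K ⊇ k` another field, and `M = l·K` a compositum of `l`
and `K` (over `k`) in which `l` and `K` are linearly disjoint, with `M/K` finite.  Let
`k' = l ∩ K`.  If `[lK : K] = [l : k']`, then for `x ∈ l` the norm of `x` in `lK/K` equals its
norm in `l/k'` (viewed in `K`). -/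
theorem norm_compositum_eq_norm_of_linearlyDisjoint
    (k k' l K M : Type*)
    [Field k] [Field k'] [Field l] [Field K] [Field M]
    [Algebra k l] [Algebra k K] [Algebra k M]
    [Algebra k k'] [Algebra k' l] [Algebra k' K] [Algebra k' M]
    [Algebra l M] [Algebra K M]
    [IsScalarTower k k' l] [IsScalarTower k k' K]
    [IsScalarTower k l M] [IsScalarTower k K M]
    [IsScalarTower k' l M] [IsScalarTower k' K M]
    [FiniteDimensional k l] [FiniteDimensional K M]
    -- `l` and `K` are linearly disjoint over `k` inside `M`
    (hdisj : Function.Injective (Algebra.TensorProduct.productMap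
      (IsScalarTower.toAlgHom k l M) (IsScalarTower.toAlgHom k K M)))
    -- `M` is the compositum `l·K`
    (hcomp : (IsScalarTower.toAlgHom k l M).range ⊔ (IsScalarTower.toAlgHom k K M).range = ⊤)
    -- `k' = l ∩ K`: an element of `l` lies in `K` (inside `M`) iff it comes from `k'`
    (hint : ∀ y : l, (∃ z : K, algebraMap l M y = algebraMap K M z) ↔
      ∃ w : k', algebraMap k' l w = y)
    -- the two extensions have the same degree
    (hdeg : finrank K M = finrank k' l)
    (x : l) :
    Algebra.norm K (algebraMap l M x) = algebraMap k' K (Algebra.norm k' x) := by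
  classical
  set φ := algebraMap l M with hφ
  -- the K-span of the image of l is all of M
  have hone : (1 : M) ∈ Submodule.span K (Set.range φ) :=
    Submodule.subset_span ⟨1, map_one φ⟩
  have hmul : ∀ (a b : M), a ∈ Submodule.span K (Set.range φ) →
      b ∈ Submodule.span K (Set.range φ) → a * b ∈ Submodule.span K (Set.range φ) := by
    intro a b ha hb
    have h := Submodule.mul_mem_mul ha hb
    rw [Submodule.span_mul_span] at h
    refine Submodule.span_le.2 ?_ h
    rintro _ ⟨_, ⟨u, rfl⟩, _, ⟨v, rfl⟩, rfl⟩
    exact Submodule.subset_span ⟨u * v, by rw [map_mul]⟩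
  have hspan : Submodule.span K (Set.range φ) = ⊤ := by
    set A : Subalgebra K M := (Submodule.span K (Set.range φ)).toSubalgebra hone hmul with hA
    have h1 : (IsScalarTower.toAlgHom k l M).range ≤ A.restrictScalars k := by
      rintro _ ⟨y, rfl⟩
      exact Submodule.subset_span ⟨y, rfl⟩
    have h2 : (IsScalarTower.toAlgHom k K M).range ≤ A.restrictScalars k := by
      rintro _ ⟨z, rfl⟩
      show algebraMap K M z ∈ Submodule.span K (Set.range ⇑φ)
      rw [Algebra.algebraMap_eq_smul_one]
      exact Submodule.smul_mem _ z hone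
    have htop : (⊤ : Subalgebra k M) ≤ A.restrictScalars k := hcomp ▸ sup_le h1 h2
    rw [eq_top_iff]
    intro m _
    exact htop (show m ∈ (⊤ : Subalgebra k M) from trivial)
  -- the image of a k'-basis of l is a K-basis of M
  haveI : FiniteDimensional k' l := FiniteDimensional.right k k' l
  set b : Basis (Fin (finrank k' l)) k' l := finBasis k' l with hb
  set f : Fin (finrank k' l) → M := fun i => φ (b i) with hf
  have hexpand : ∀ y : l, φ y = ∑ i, algebraMap k' K (b.repr y i) • f i := by
    intro y
    conv_lhs => rw [← b.sum_repr y]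
    rw [map_sum]
    refine Finset.sum_congr rfl fun i _ => ?_
    rw [Algebra.smul_def, map_mul, ← IsScalarTower.algebraMap_apply k' l M,
      IsScalarTower.algebraMap_apply k' K M, ← Algebra.smul_def]
  have hfspan : ⊤ ≤ Submodule.span K (Set.range f) := by
    rw [← hspan]
    refine Submodule.span_le.2 ?_
    rintro _ ⟨y, rfl⟩
    rw [hexpand y]
    exact Submodule.sum_mem _ fun i _ =>
      Submodule.smul_mem _ _ (Submodule.subset_span ⟨i, rfl⟩)
  have hcard : Fintype.card (Fin (finrank k' l)) = finrank K M := by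
    simp [hdeg]
  set b' : Basis (Fin (finrank k' l)) K M :=
    basisOfTopLeSpanOfCardEqFinrank f hfspan hcard with hb'
  have hb'coe : ∀ i, b' i = f i := fun i => by
    rw [hb', coe_basisOfTopLeSpanOfCardEqFinrank]
  -- the representation of `φ y` in `b'` is the image of the representation of `y` in `b`
  have hrepr : ∀ (y : l) (i), b'.repr (φ y) i = algebraMap k' K (b.repr y i) := by
    intro y i
    have : φ y = ∑ j, algebraMap k' K (b.repr y j) • b' j := by
      rw [hexpand y]
      exact Finset.sum_congr rfl fun j _ => by rw [hb'coe]
    rw [this, map_sum, Finsupp.finset_sum_apply]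
    have hterm : ∀ c, (b'.repr ((algebraMap k' K) ((b.repr y) c) • b' c)) i
        = if c = i then algebraMap k' K (b.repr y c) else 0 := by
      intro c
      rw [map_smul, Finsupp.smul_apply, Basis.repr_self, Finsupp.single_apply,
        smul_eq_mul, mul_ite, mul_one, mul_zero]
    rw [Finset.sum_congr rfl fun c _ => hterm c, Finset.sum_ite_eq']
    simp
  -- the multiplication matrices correspond
  have hmat : Algebra.leftMulMatrix b' (φ x)
      = (algebraMap k' K).mapMatrix (Algebra.leftMulMatrix b x) := by
    ext i j
    rw [Algebra.leftMulMatrix_eq_repr_mul, RingHom.mapMatrix_apply, Matrix.map_apply,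
      Algebra.leftMulMatrix_eq_repr_mul]
    have : φ x * b' j = φ (x * b j) := by rw [map_mul, hb'coe]
    rw [this, hrepr]
  rw [Algebra.norm_eq_matrix_det b', Algebra.norm_eq_matrix_det b, hmat,
    RingHom.mapMatrix_apply]
  exact (RingHom.map_det _ _).symm
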